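/- Let λ ∈ ℂ with 0 < |λ| < 1, let x ∈ ℂ, and let k ≥ 1 be an integer. Then the series ∑_{n=0}^{∞} λ^n·(n + x)^k and ∑_{n=0}^{∞} λ^n·(n + x)^{k−1} converge absolutely and −B_k(λ; x)/k = (Log λ/k)·∑_{n=0}^{∞} λ^n·(n + x)^k + ∑_{n=0}^{∞} λ^n·(n + x)^{k−1}. -/

import Mathlib

noncomputable def lambdaBernoulli (lam : ℂ) : ℕ → ℂ
  | 0 => Complex.log lam / (lam - 1)
  | n + 1 =>
      ((if n = 0 then (1 : ℂ) else 0) -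
        lam * ∑ k : Fin (n + 1), ((n + 1).choose (k : ℕ) : ℂ) * lambdaBernoulli lam k) / (lam - 1)

noncomputable def lambdaBernoulliPoly (lam : ℂ) (n : ℕ) (x : ℂ) : ℂ :=
  ∑ k ∈ Finset.range (n + 1), (n.choose k : ℂ) * lambdaBernoulli lam k * x ^ (n - k)

open Finset

lemma lb_recur (lam : ℂ) (hlam : lam ≠ 1) (n : ℕ) :
    lam * ∑ j ∈ range (n + 1), (n.choose j : ℂ) * lambdaBernoulli lam j - lambdaBernoulli lam n
      = if n = 0 then Complex.log lam else if n = 1 then 1 else 0 := by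
  have hne : lam - 1 ≠ 0 := sub_ne_zero.mpr hlam
  cases n with
  | zero =>
      have hB0 : lambdaBernoulli lam 0 = Complex.log lam / (lam - 1) := by
        simp [lambdaBernoulli]
      rw [if_pos rfl, range_one, sum_singleton, Nat.choose_self, Nat.cast_one, one_mul, hB0]
      field_simp
  | succ m =>
      have hdef : lambdaBernoulli lam (m + 1)
          = ((if m = 0 then (1 : ℂ) else 0) -
              lam * ∑ k ∈ range (m + 1),
                ((m + 1).choose k : ℂ) * lambdaBernoulli lam k) / (lam - 1) := by
        rw [lambdaBernoulli, Fin.sum_univ_eq_sum_range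
          (fun k => ((m + 1).choose k : ℂ) * lambdaBernoulli lam k) (m + 1)]
      have hS : ∑ j ∈ range (m + 1 + 1), ((m + 1).choose j : ℂ) * lambdaBernoulli lam j
          = (∑ j ∈ range (m + 1), ((m + 1).choose j : ℂ) * lambdaBernoulli lam j)
            + lambdaBernoulli lam (m + 1) := by
        rw [sum_range_succ, Nat.choose_self, Nat.cast_one, one_mul]
      rw [hS, hdef]
      by_cases hm : m = 0
      · subst hm
        norm_num
        field_simp
        ring
      · rw [if_neg hm, if_neg (by omega : ¬ m + 1 = 0), if_neg (by omega : ¬ m + 1 = 1)]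
        field_simp
        ring

lemma chooseAux {n j i : ℕ} (hji : i ≤ j) (hjn : j ≤ n) :
    n.choose j * j.choose i = n.choose (n - j + i) * (n - j + i).choose i := by
  have h1 : n - j + i ≤ n := by omega
  have h2 : i ≤ n - j + i := by omega
  rw [Nat.choose_mul hji, Nat.choose_mul h2]
  congr 1
  have h3 : n - j + i - i = n - j := by omega
  rw [h3]
  have h4 : j - i ≤ n - i := by omega
  have h5 : n - i - (j - i) = n - j := by omega
  rw [← h5, Nat.choose_symm h4]

lemma lb_swap (lam : ℂ) (n : ℕ) (x : ℂ) :
    ∑ j ∈ range (n + 1), (n.choose j : ℂ) * lambdaBernoulliPoly lam j x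
      = ∑ m ∈ range (n + 1), (n.choose m : ℂ) *
          (∑ j ∈ range (m + 1), (m.choose j : ℂ) * lambdaBernoulli lam j) * x ^ (n - m) := by
  simp only [lambdaBernoulliPoly, mul_sum, sum_mul]
  rw [Finset.sum_sigma' (range (n+1)) (fun j => range (j+1))
      (fun j i => (n.choose j : ℂ) * ((j.choose i : ℂ) * lambdaBernoulli lam i * x ^ (j - i))),
    Finset.sum_sigma' (range (n+1)) (fun m => range (m+1))
      (fun m j => (n.choose m : ℂ) * ((m.choose j : ℂ) * lambdaBernoulli lam j) * x ^ (n - m))]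
  refine Finset.sum_nbij' (fun p => ⟨n - p.1 + p.2, p.2⟩) (fun p => ⟨n - p.1 + p.2, p.2⟩)
    ?_ ?_ ?_ ?_ ?_
  · rintro ⟨j, i⟩ hp
    simp only [mem_sigma, mem_range] at hp ⊢
    omega
  · rintro ⟨m, i⟩ hp
    simp only [mem_sigma, mem_range] at hp ⊢
    omega
  · rintro ⟨j, i⟩ hp
    simp only [mem_sigma, mem_range] at hp
    have : n - (n - j + i) + i = j := by omega
    simp [this]
  · rintro ⟨m, i⟩ hp
    simp only [mem_sigma, mem_range] at hp
    have : n - (n - m + i) + i = m := by omega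
    simp [this]
  · rintro ⟨j, i⟩ hp
    simp only [mem_sigma, mem_range] at hp
    have hji : i ≤ j := by omega
    have hjn : j ≤ n := by omega
    have hc : (n.choose j : ℂ) * (j.choose i : ℂ)
        = (n.choose (n - j + i) : ℂ) * ((n - j + i).choose i : ℂ) := by
      rw [← Nat.cast_mul, ← Nat.cast_mul, chooseAux hji hjn]
    have hexp : n - (n - j + i) = j - i := by omega
    simp only [hexp]
    linear_combination (lambdaBernoulli lam i * x ^ (j - i)) * hc

lemma lb_star (lam : ℂ) (hlam : lam ≠ 1) (n : ℕ) (hn : 1 ≤ n) (x : ℂ) :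
    lam * ∑ j ∈ range (n + 1), (n.choose j : ℂ) * lambdaBernoulliPoly lam j x
        - lambdaBernoulliPoly lam n x
      = Complex.log lam * x ^ n + (n : ℂ) * x ^ (n - 1) := by
  rw [lb_swap]
  have hP : lambdaBernoulliPoly lam n x
      = ∑ m ∈ range (n + 1), (n.choose m : ℂ) * lambdaBernoulli lam m * x ^ (n - m) := rfl
  rw [hP, mul_sum, ← sum_sub_distrib]
  have hterm : ∀ m ∈ range (n + 1),
      lam * ((n.choose m : ℂ) * (∑ j ∈ range (m + 1), (m.choose j : ℂ) * lambdaBernoulli lam j)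
          * x ^ (n - m)) - (n.choose m : ℂ) * lambdaBernoulli lam m * x ^ (n - m)
      = (if m = 0 then Complex.log lam * x ^ n else 0)
        + (if m = 1 then (n : ℂ) * x ^ (n - 1) else 0) := by
    intro m _
    have h := lb_recur lam hlam m
    have : lam * ((n.choose m : ℂ) * (∑ j ∈ range (m + 1), (m.choose j : ℂ) * lambdaBernoulli lam j)
          * x ^ (n - m)) - (n.choose m : ℂ) * lambdaBernoulli lam m * x ^ (n - m)
        = (n.choose m : ℂ) * x ^ (n - m) *
          (lam * ∑ j ∈ range (m + 1), (m.choose j : ℂ) * lambdaBernoulli lam j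
            - lambdaBernoulli lam m) := by ring
    rw [this, h]
    rcases Nat.lt_or_ge m 2 with hm | hm
    · interval_cases m
      · simp
        ring
      · simp [Nat.choose_one_right]
        try ring
    · rw [if_neg (by omega : ¬ m = 0), if_neg (by omega : ¬ m = 1),
        if_neg (by omega : ¬ m = 0), if_neg (by omega : ¬ m = 1)]
      ring
  rw [sum_congr rfl hterm, sum_add_distrib, Finset.sum_ite_eq' (range (n + 1)) 0,
    Finset.sum_ite_eq' (range (n + 1)) 1, if_pos (mem_range.mpr (by omega)),
    if_pos (mem_range.mpr (by omega))]

noncomputable def lbF (lam : ℂ) (m : ℕ) (y : ℂ) : ℂ := ∑' i : ℕ, lam ^ i * ((i : ℂ) + y) ^ m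

lemma lb_summable_norm (lam : ℂ) (h1 : ‖lam‖ < 1) (m : ℕ) (y : ℂ) :
    Summable (fun i : ℕ => ‖lam ^ i * ((i : ℂ) + y) ^ m‖) := by
  set r : ℝ := ‖lam‖ with hr
  have hr0 : 0 ≤ r := norm_nonneg lam
  have key : Summable (fun i : ℕ => ((i : ℝ) + ‖y‖) ^ m * r ^ i) := by
    have heq : (fun i : ℕ => ((i : ℝ) + ‖y‖) ^ m * r ^ i)
        = fun i : ℕ => ∑ j ∈ Finset.range (m + 1),
            (m.choose j : ℝ) * ‖y‖ ^ (m - j) * ((i : ℝ) ^ j * r ^ i) := by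
      funext i
      rw [add_pow, Finset.sum_mul]
      exact Finset.sum_congr rfl fun j _ => by ring
    rw [heq]
    apply summable_sum
    intro j _
    exact (summable_pow_mul_geometric_of_norm_lt_one (R := ℝ) j
      (by rwa [Real.norm_eq_abs, abs_of_nonneg hr0])).mul_left _
  refine Summable.of_nonneg_of_le (fun i => norm_nonneg _) (fun i => ?_) key
  rw [norm_mul, norm_pow, norm_pow]
  have h2 : ‖(i : ℂ) + y‖ ≤ (i : ℝ) + ‖y‖ := by
    calc ‖(i : ℂ) + y‖ ≤ ‖(i : ℂ)‖ + ‖y‖ := norm_add_le _ _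
      _ = (i : ℝ) + ‖y‖ := by rw [Complex.norm_natCast]
  calc ‖lam‖ ^ i * ‖(i : ℂ) + y‖ ^ m ≤ ‖lam‖ ^ i * ((i : ℝ) + ‖y‖) ^ m := by
        gcongr
    _ = ((i : ℝ) + ‖y‖) ^ m * r ^ i := by rw [hr]; ring

lemma lb_summable (lam : ℂ) (h1 : ‖lam‖ < 1) (m : ℕ) (y : ℂ) :
    Summable (fun i : ℕ => lam ^ i * ((i : ℂ) + y) ^ m) :=
  (lb_summable_norm lam h1 m y).of_norm

lemma lb_shift (lam : ℂ) (h1 : ‖lam‖ < 1) (m : ℕ) (y : ℂ) :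
    lam * lbF lam m (y + 1) = lbF lam m y - y ^ m := by
  have hs := lb_summable lam h1 m y
  unfold lbF
  rw [Summable.tsum_eq_zero_add hs]
  simp only [pow_zero, Nat.cast_zero, one_mul, zero_add]
  have h2 : (fun i : ℕ => lam ^ (i + 1) * ((↑(i + 1) : ℂ) + y) ^ m)
      = fun i : ℕ => lam * (lam ^ i * ((i : ℂ) + (y + 1)) ^ m) := by
    funext i; push_cast; ring
  rw [h2, tsum_mul_left]
  ring

lemma lb_binom (lam : ℂ) (h1 : ‖lam‖ < 1) (n : ℕ) (y : ℂ) :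
    ∑ j ∈ range (n + 1), (n.choose j : ℂ) * lbF lam j y = lbF lam n (y + 1) := by
  unfold lbF
  have h2 : ∀ i : ℕ, lam ^ i * ((i : ℂ) + (y + 1)) ^ n
      = ∑ j ∈ range (n + 1), (n.choose j : ℂ) * (lam ^ i * ((i : ℂ) + y) ^ j) := by
    intro i
    rw [show ((i : ℂ) + (y + 1)) = ((i : ℂ) + y) + 1 by ring, add_pow, Finset.mul_sum]
    exact Finset.sum_congr rfl fun j _ => by ring
  calc ∑ j ∈ range (n + 1), (n.choose j : ℂ) * ∑' i : ℕ, lam ^ i * ((i : ℂ) + y) ^ j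
      = ∑ j ∈ range (n + 1), ∑' i : ℕ, (n.choose j : ℂ) * (lam ^ i * ((i : ℂ) + y) ^ j) :=
        sum_congr rfl fun j _ => tsum_mul_left.symm
    _ = ∑' i : ℕ, ∑ j ∈ range (n + 1), (n.choose j : ℂ) * (lam ^ i * ((i : ℂ) + y) ^ j) :=
        (Summable.tsum_finsetSum fun j _ => (lb_summable lam h1 j y).mul_left _).symm
    _ = ∑' i : ℕ, lam ^ i * ((i : ℂ) + (y + 1)) ^ n := tsum_congr fun i => (h2 i).symm

lemma lb_jsum (lam : ℂ) (h1 : ‖lam‖ < 1) (n : ℕ) (hn : 1 ≤ n) (y : ℂ) :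
    ∑ j ∈ range (n + 1), (n.choose j : ℂ) * (j : ℂ) * lbF lam (j - 1) y
      = (n : ℂ) * lbF lam (n - 1) (y + 1) := by
  rw [Finset.sum_range_succ']
  have hterm : ∀ i ∈ range n, (n.choose (i + 1) : ℂ) * ((i + 1 : ℕ) : ℂ) * lbF lam (i + 1 - 1) y
      = (n : ℂ) * (((n - 1).choose i : ℂ) * lbF lam i y) := by
    intro i _
    have h := Nat.add_one_mul_choose_eq (n - 1) i
    rw [Nat.sub_add_cancel hn] at h
    have hC : ((n : ℂ)) * ((n - 1).choose i : ℂ) = (n.choose (i + 1) : ℂ) * ((i + 1 : ℕ) : ℂ) := by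
      exact_mod_cast h
    rw [Nat.add_sub_cancel]
    linear_combination lbF lam i y * hC.symm
  rw [sum_congr rfl hterm, ← mul_sum]
  rw [show range n = range (n - 1 + 1) by rw [Nat.sub_add_cancel hn]]
  rw [lb_binom lam h1 (n - 1) y]
  simp

noncomputable def lbT (lam x : ℂ) (n : ℕ) : ℂ :=
  -(Complex.log lam) * lbF lam n x - (n : ℂ) * lbF lam (n - 1) x

lemma lbT_recur (lam : ℂ) (h1 : ‖lam‖ < 1) (x : ℂ) (n : ℕ) (hn : 1 ≤ n) :
    lam * ∑ j ∈ range (n + 1), (n.choose j : ℂ) * lbT lam x j - lbT lam x n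
      = Complex.log lam * x ^ n + (n : ℂ) * x ^ (n - 1) := by
  have e0 : ∀ j ∈ range (n + 1), (n.choose j : ℂ) * lbT lam x j
      = -(Complex.log lam) * ((n.choose j : ℂ) * lbF lam j x)
        - (n.choose j : ℂ) * (j : ℂ) * lbF lam (j - 1) x := by
    intro j _; unfold lbT; ring
  rw [sum_congr rfl e0, sum_sub_distrib, ← mul_sum, lb_binom lam h1 n x,
    lb_jsum lam h1 n hn x]
  have s1 := lb_shift lam h1 n x
  have s2 := lb_shift lam h1 (n - 1) x
  unfold lbT
  linear_combination (-(Complex.log lam)) * s1 - (n : ℂ) * s2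

lemma lb_main (lam : ℂ) (h1 : ‖lam‖ < 1) (x : ℂ) (n : ℕ) :
    lbT lam x n = lambdaBernoulliPoly lam n x := by
  have hlam : lam ≠ 1 := by
    rintro rfl; simp at h1
  have hne : lam - 1 ≠ 0 := sub_ne_zero.mpr hlam
  induction n using Nat.strong_induction_on with
  | _ n IH =>
    cases n with
    | zero =>
        have hF0 : lbF lam 0 x = (1 - lam)⁻¹ := by
          unfold lbF
          simp only [pow_zero, mul_one]
          exact tsum_geometric_of_norm_lt_one h1
        have hP0 : lambdaBernoulliPoly lam 0 x = Complex.log lam / (lam - 1) := by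
          unfold lambdaBernoulliPoly
          simp [lambdaBernoulli]
        unfold lbT
        rw [hF0, hP0]
        simp only [Nat.cast_zero, zero_mul, sub_zero]
        have h1m : (1 : ℂ) - lam ≠ 0 := by
          intro h; apply hne; linear_combination -h
        field_simp
        ring
    | succ m =>
        have hn : 1 ≤ m + 1 := by omega
        have h2 := lbT_recur lam h1 x (m + 1) hn
        have h3 := lb_star lam hlam (m + 1) hn x
        have hsum : ∑ j ∈ range (m + 1), ((m + 1).choose j : ℂ) * lbT lam x j
            = ∑ j ∈ range (m + 1), ((m + 1).choose j : ℂ) * lambdaBernoulliPoly lam j x :=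
          sum_congr rfl fun j hj => by rw [IH j (mem_range.mp hj)]
        rw [sum_range_succ, Nat.choose_self, Nat.cast_one, one_mul] at h2 h3
        have key : (lam - 1) * (lbT lam x (m + 1) - lambdaBernoulliPoly lam (m + 1) x) = 0 := by
          linear_combination h2 - h3 - lam * hsum
        rcases mul_eq_zero.mp key with h | h
        · exact absurd h hne
        · exact sub_eq_zero.mp h

theorem lambdaBernoulliPoly_eq_tsum (lam : ℂ) (h0 : 0 < ‖lam‖)
    (h1 : ‖lam‖ < 1) (x : ℂ) (k : ℕ) (hk : 1 ≤ k) :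
    Summable (fun n : ℕ => ‖lam ^ n * ((n : ℂ) + x) ^ k‖) ∧
    Summable (fun n : ℕ => ‖lam ^ n * ((n : ℂ) + x) ^ (k - 1)‖) ∧
    -lambdaBernoulliPoly lam k x / (k : ℂ) =
      (Complex.log lam / (k : ℂ)) * (∑' n : ℕ, lam ^ n * ((n : ℂ) + x) ^ k) +
        ∑' n : ℕ, lam ^ n * ((n : ℂ) + x) ^ (k - 1) := by
  refine ⟨lb_summable_norm lam h1 k x, lb_summable_norm lam h1 (k - 1) x, ?_⟩
  have hk0 : (k : ℂ) ≠ 0 := Nat.cast_ne_zero.mpr (by omega)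
  have hA : (∑' n : ℕ, lam ^ n * ((n : ℂ) + x) ^ k) = lbF lam k x := rfl
  have hB : (∑' n : ℕ, lam ^ n * ((n : ℂ) + x) ^ (k - 1)) = lbF lam (k - 1) x := rfl
  rw [hA, hB, ← lb_main lam h1 x k]
  unfold lbT
  field_simp
  ring
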